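/- Let X be a real Banach space and let x, y ∈ X be nonzero. There exist λ < 0 and r with 0 < r ≤ |λ|‖x‖ such that ‖λx − y‖ < r if and only if ρ'₊(x, y) < 0. -/

import Mathlib

open Metric Filter Set Topology

/-- For nonzero x, y in a real Banach space, y lies in some open ball
centered at a negative multiple of x that avoids the origin iff ρ'₊(x,y) < 0,
where ρ'₊(x,y) is the right norm derivative. -/
theorem stmt1 {X : Type*} [NormedAddCommGroup X] [NormedSpace ℝ X] [CompleteSpace X]
    (x y : X) (hx : x ≠ 0) (hy : y ≠ 0) (ρp : ℝ)
    (hρ : Tendsto (fun t : ℝ => ‖x‖ * (‖x + t • y‖ - ‖x‖) / t) (𝓝[>] (0 : ℝ)) (𝓝 ρp)) :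
    (∃ l r : ℝ, l < 0 ∧ 0 < r ∧ r ≤ |l| * ‖x‖ ∧ ‖l • x - y‖ < r) ↔ ρp < 0 := by
  have hxn : (0:ℝ) < ‖x‖ := norm_pos_iff.mpr hx
  constructor
  · rintro ⟨l, r, hl, hr, hrle, hball⟩
    set t₀ : ℝ := -l⁻¹ with ht₀def
    have ht₀ : 0 < t₀ := by
      rw [ht₀def]
      exact neg_pos.mpr (inv_lt_zero.mpr hl)
    have habs : |l| = -l := abs_of_neg hl
    have key : ‖x + t₀ • y‖ < ‖x‖ := by
      have h1 : x + t₀ • y = t₀ • (y - l • x) := by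
        rw [smul_sub, smul_smul]
        have hls : t₀ * l = -1 := by
          rw [ht₀def, neg_mul, inv_mul_cancel₀ hl.ne]
        rw [hls]
        module
      have h2 : ‖x + t₀ • y‖ = t₀ * ‖l • x - y‖ := by
        rw [h1, norm_smul, Real.norm_of_nonneg ht₀.le, norm_sub_rev]
      rw [h2]
      calc t₀ * ‖l • x - y‖ < t₀ * r := by
            exact (mul_lt_mul_iff_right₀ ht₀).mpr hball
        _ ≤ t₀ * (|l| * ‖x‖) := by
            exact (mul_le_mul_iff_right₀ ht₀).mpr hrle
        _ = ‖x‖ := by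
            rw [habs, ht₀def]
            field_simp
            exact div_self hl.ne
    have mono : ∀ t : ℝ, 0 < t → t ≤ t₀ →
        ‖x‖ * (‖x + t • y‖ - ‖x‖) / t ≤ ‖x‖ * (‖x + t₀ • y‖ - ‖x‖) / t₀ := by
      intro t ht htle
      have hconv : t₀ * ‖x + t • y‖ ≤ (t₀ - t)*‖x‖ + t*‖x + t₀ • y‖ := by
        have heq : t₀ • (x + t • y) = (t₀ - t) • x + t • (x + t₀ • y) := by
          module
        have hnn1 : (0:ℝ) ≤ t₀ - t := by linarith
        calc t₀ * ‖x + t • y‖ = ‖t₀ • (x + t • y)‖ := by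
              rw [norm_smul, Real.norm_of_nonneg ht₀.le]
          _ = ‖(t₀ - t) • x + t • (x + t₀ • y)‖ := by rw [heq]
          _ ≤ ‖(t₀ - t) • x‖ + ‖t • (x + t₀ • y)‖ := norm_add_le _ _
          _ = (t₀ - t)*‖x‖ + t*‖x + t₀ • y‖ := by
              rw [norm_smul, norm_smul, Real.norm_of_nonneg hnn1, Real.norm_of_nonneg ht.le]
      rw [div_le_div_iff₀ ht ht₀]
      nlinarith [mul_le_mul_of_nonneg_left hconv hxn.le]
    have hle : ρp ≤ ‖x‖ * (‖x + t₀ • y‖ - ‖x‖) / t₀ := by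
      refine le_of_tendsto hρ ?_
      filter_upwards [Ioc_mem_nhdsGT_of_mem ⟨le_refl (0:ℝ), ht₀⟩] with t ht
      exact mono t ht.1 ht.2
    have hneg : ‖x‖ * (‖x + t₀ • y‖ - ‖x‖) / t₀ < 0 := by
      apply div_neg_of_neg_of_pos _ ht₀
      nlinarith
    linarith
  · intro hρn
    have hev : ∀ᶠ t in 𝓝[>] (0:ℝ), ‖x‖ * (‖x + t • y‖ - ‖x‖) / t < 0 :=
      hρ.eventually (Filter.Tendsto.eventually_lt_const hρn tendsto_id)
    have hev2 : ∀ᶠ t in 𝓝[>] (0:ℝ),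
        (‖x‖ * (‖x + t • y‖ - ‖x‖) / t < 0 ∧ 0 < t) :=
      hev.and (eventually_mem_nhdsWithin)
    obtain ⟨t, htq, ht⟩ := hev2.exists
    have hxt : ‖x + t • y‖ < ‖x‖ := by
      by_contra h
      push_neg at h
      have : 0 ≤ ‖x‖ * (‖x + t • y‖ - ‖x‖) / t :=
        div_nonneg (mul_nonneg (norm_nonneg _) (by linarith)) ht.le
      linarith
    refine ⟨-t⁻¹, t⁻¹ * ‖x‖, ?_, mul_pos (inv_pos.mpr ht) hxn, ?_, ?_⟩
    · have : 0 < t⁻¹ := inv_pos.mpr ht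
      linarith
    · rw [abs_neg, abs_inv, abs_of_pos ht]
    · have h1 : (-t⁻¹) • x - y = (-t⁻¹) • (x + t • y) := by
        rw [smul_add, smul_smul]
        have : -t⁻¹ * t = -1 := by field_simp
        rw [this]
        module
      rw [h1, norm_smul, Real.norm_eq_abs, abs_neg, abs_inv, abs_of_pos ht]
      exact (mul_lt_mul_iff_right₀ (inv_pos.mpr ht)).mpr hxt
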